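/- Let H ~ χ²_d(ν) be a noncentral chi-squared random variable with d degrees of freedom and noncentrality ν, let β, y > 0 and K = d + √(2βd) + β. If ν ≥ 4y + β + √(2βd) + 2√(y(4y + (√(2β) + √d)²)), then P(H > K) ≥ 1 − exp(−y). -/

import Mathlib

open MeasureTheory ProbabilityTheory Real
open scoped NNReal ENNReal

lemma my_exp_quad_le (u : ℝ) (hu : 0 ≤ u) : Real.exp (u - u^2/2) ≤ 1 + u := by
  have hderiv : ∀ x : ℝ, HasDerivAt (fun x : ℝ => (1+x) * Real.exp (x^2/2 - x))
      (x^2 * Real.exp (x^2/2 - x)) x := by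
    intro x
    have h1 : HasDerivAt (fun x : ℝ => x^2/2 - x) (x - 1) x := by
      have := ((hasDerivAt_pow 2 x).div_const 2).sub (hasDerivAt_id x)
      simpa [Pi.sub_def] using this
    have h3 : HasDerivAt (fun x : ℝ => (1+x) * Real.exp (x^2/2 - x))
        (1 * Real.exp (x^2/2 - x) + (1 + x) * (Real.exp (x^2/2 - x) * (x - 1))) x :=
      ((hasDerivAt_id x).const_add (1:ℝ)).mul h1.exp
    convert h3 using 1
    ring
  have hmono : Monotone (fun x : ℝ => (1+x) * Real.exp (x^2/2 - x)) := by
    apply monotone_of_deriv_nonneg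
    · exact fun x => (hderiv x).differentiableAt
    · intro x
      rw [(hderiv x).deriv]
      positivity
  have h0 := hmono hu
  simp only [one_pow, zero_pow, add_zero] at h0
  norm_num at h0
  have hE := Real.exp_pos (u^2/2 - u)
  have key : Real.exp (u - u^2/2) * Real.exp (u^2/2 - u) = 1 := by
    rw [← Real.exp_add]; ring_nf; exact Real.exp_zero
  nlinarith [h0, hE, key, Real.exp_pos (u - u^2/2)]

lemma gauss_integral_base (l c : ℝ) (hl : 0 ≤ l) :
    ∫ x, Real.exp (-(l * (x + c)^2)) ∂(gaussianReal 0 1)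
      = Real.exp (-(l * c^2) / (1 + 2*l)) / Real.sqrt (1 + 2*l) := by
  have h12 : (0:ℝ) < 1 + 2*l := by linarith
  have hb : (0:ℝ) < 1/2 + l := by linarith
  rw [gaussianReal_of_var_ne_zero 0 one_ne_zero]
  have hpdf : gaussianPDF 0 1 = fun x => ((Real.toNNReal (gaussianPDFReal 0 1 x) : ℝ≥0) : ℝ≥0∞) := rfl
  rw [hpdf, integral_withDensity_eq_integral_smul
      ((measurable_gaussianPDFReal 0 1).real_toNNReal) _]
  have hpt : ∀ x : ℝ, (Real.toNNReal (gaussianPDFReal 0 1 x) : ℝ≥0) • Real.exp (-(l * (x + c)^2))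
      = (Real.sqrt (2*π))⁻¹ * (Real.exp (-(l*c^2)/(1+2*l)) * Real.exp (-((1/2+l) * (x + l*c/(1/2+l))^2))) := by
    intro x
    rw [NNReal.smul_def, smul_eq_mul, Real.coe_toNNReal _ (gaussianPDFReal_nonneg 0 1 x)]
    simp only [gaussianPDFReal, NNReal.coe_one, mul_one, sub_zero]
    rw [mul_assoc, ← Real.exp_add, ← Real.exp_add]
    congr 2
    field_simp
    ring
  simp_rw [hpt]
  rw [integral_const_mul, integral_const_mul,
    integral_add_right_eq_self (fun x => Real.exp (-((1/2+l) * x^2))) (l*c/(1/2+l))]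
  have : ∫ x : ℝ, Real.exp (-((1/2+l) * x^2)) = Real.sqrt (π / (1/2+l)) := by
    have := integral_gaussian (1/2+l)
    rw [← this]
    congr 1 with x
    ring_nf
  rw [this]
  rw [div_eq_mul_inv, mul_comm ((Real.sqrt (2*π))⁻¹)]
  rw [mul_assoc]
  congr 1
  rw [← Real.sqrt_inv, ← Real.sqrt_mul (by positivity)]
  congr 1
  have hπ := Real.pi_pos
  field_simp
  rw [← Real.sqrt_mul (div_nonneg zero_le_one h12.le), one_div, inv_mul_cancel₀ h12.ne', Real.sqrt_one]

lemma gauss_mgf_le (l c : ℝ) (hl : 0 ≤ l) :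
    ∫ x, Real.exp (-(l * (x + c)^2)) ∂(gaussianReal 0 1)
      ≤ Real.exp (l^2*(1 + 2*c^2) - l*(1 + c^2)) := by
  rw [gauss_integral_base l c hl]
  have h12 : (0:ℝ) < 1 + 2*l := by linarith
  have hA : Real.exp (l - l^2) ≤ Real.sqrt (1 + 2*l) := by
    rw [show l - l^2 = (2*l - (2*l)^2/2)/2 by ring, Real.exp_half]
    exact Real.sqrt_le_sqrt (my_exp_quad_le (2*l) (by linarith))
  have hs : (0:ℝ) < Real.sqrt (1 + 2*l) := Real.sqrt_pos.mpr h12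
  calc Real.exp (-(l * c^2) / (1 + 2*l)) / Real.sqrt (1 + 2*l)
      ≤ Real.exp (-(l * c^2) / (1 + 2*l)) / Real.exp (l - l^2) := by
        apply div_le_div_of_nonneg_left (Real.exp_pos _).le (Real.exp_pos _) hA
    _ = Real.exp (-(l * c^2) / (1 + 2*l) - (l - l^2)) := by rw [← Real.exp_sub]
    _ ≤ Real.exp (l^2*(1 + 2*c^2) - l*(1 + c^2)) := by
        apply Real.exp_le_exp.mpr
        rw [div_sub' (ne_of_gt h12), div_le_iff₀ h12]
        nlinarith [mul_nonneg hl (sq_nonneg c), sq_nonneg l, mul_nonneg (mul_nonneg hl hl) (sq_nonneg (l*c))]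

lemma aux_mgf_le {Ω : Type*} [MeasureSpace Ω] [IsProbabilityMeasure (ℙ : Measure Ω)]
    (d : ℕ) (W : Fin d → Ω → ℝ) (hmeas : ∀ i, Measurable (W i))
    (hindep : iIndepFun W ℙ)
    (hlaw : ∀ i, Measure.map (W i) ℙ = gaussianReal 0 1)
    (a : Fin d → ℝ) (l : ℝ) (hl : 0 ≤ l) :
    mgf (fun ω => ∑ i, (W i ω + a i)^2) ℙ (-l)
      ≤ Real.exp (l^2*((d:ℝ) + 2*∑ i, (a i)^2) - l*((d:ℝ) + ∑ i, (a i)^2)) := by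
  classical
  set X : Fin d → Ω → ℝ := fun i ω => (W i ω + a i)^2 with hX
  have hXmeas : ∀ i, Measurable (X i) := fun i => ((hmeas i).add_const (a i)).pow_const 2
  have hXindep : iIndepFun X ℙ :=
    hindep.comp (fun i (x:ℝ) => (x + a i)^2)
      (fun i => (measurable_id.add_const (a i)).pow_const 2)
  have hfun : (fun ω => ∑ i, (W i ω + a i)^2) = ∑ i, X i := by
    ext ω; simp [X]
  rw [hfun, hXindep.mgf_sum hXmeas Finset.univ]
  have hcoord : ∀ i, mgf (X i) ℙ (-l) ≤ Real.exp (l^2*(1 + 2*(a i)^2) - l*(1 + (a i)^2)) := by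
    intro i
    have hmap : ∫ x, Real.exp (-(l * (x + a i)^2)) ∂(gaussianReal 0 1) = mgf (X i) ℙ (-l) := by
      rw [← hlaw i, integral_map (hmeas i).aemeasurable
        (Measurable.aestronglyMeasurable (by measurability))]
      unfold mgf
      congr 1 with ω
      simp only [neg_mul, X]
    rw [← hmap]
    exact gauss_mgf_le l (a i) hl
  calc ∏ i, mgf (X i) ℙ (-l)
      ≤ ∏ i, Real.exp (l^2*(1 + 2*(a i)^2) - l*(1 + (a i)^2)) :=
        Finset.prod_le_prod (fun i _ => mgf_nonneg) (fun i _ => hcoord i)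
    _ = Real.exp (∑ i, (l^2*(1 + 2*(a i)^2) - l*(1 + (a i)^2))) := (Real.exp_sum _ _).symm
    _ = _ := by
        congr 1
        have h1 : ∀ i ∈ Finset.univ, l^2*(1 + 2*(a i)^2) - l*(1 + (a i)^2)
            = (l^2 - l) + (2*l^2 - l)*(a i)^2 := by intros; ring
        rw [Finset.sum_congr rfl h1, Finset.sum_add_distrib, Finset.sum_const, ← Finset.mul_sum]
        simp [Finset.card_univ, nsmul_eq_mul]
        ring

lemma lt_aux1 (D y : ℝ) (hD : 0 < D) (hy : 0 ≤ y) :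
    (Real.sqrt (D*y)/D) * (2*Real.sqrt (D*y)) = 2*y := by
  have h := Real.mul_self_sqrt (mul_nonneg hD.le hy)
  rw [div_mul_eq_mul_div, show Real.sqrt (D*y)*(2*Real.sqrt (D*y))
    = 2*(Real.sqrt (D*y)*Real.sqrt (D*y)) by ring, h]
  field_simp

lemma lt_aux2 (D y : ℝ) (hD : 0 < D) (hy : 0 ≤ y) :
    (Real.sqrt (D*y)/D)^2 * D = y := by
  rw [div_pow, Real.sq_sqrt (mul_nonneg hD.le hy)]
  field_simp

set_option maxHeartbeats 1000000 in
/-- Dense-change power bound: if `H ~ χ²_d(ν)` with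
`ν ≥ 4y + β + √(2βd) + 2√(y (4y + (√(2β) + √d)²))` and `K = d + √(2βd) + β`,
then `P(H > K) ≥ 1 - exp(-y)`. -/
theorem noncentral_chisq_dense_power
    {Ω : Type*} [MeasureSpace Ω] [IsProbabilityMeasure (ℙ : Measure Ω)]
    (d : ℕ) (Z : Fin d → Ω → ℝ)
    (hindep : iIndepFun Z ℙ)
    (hlaw : ∀ i, Measure.map (Z i) ℙ = gaussianReal 0 1)
    (a : Fin d → ℝ) (ν : ℝ) (hνdef : ∑ i, (a i) ^ 2 = ν)
    (H : Ω → ℝ) (hH : ∀ ω, H ω = ∑ i, (Z i ω + a i) ^ 2)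
    (β y K : ℝ) (hβ : 0 < β) (hy : 0 < y)
    (hK : K = d + Real.sqrt (2 * β * d) + β)
    (hν : ν ≥ 4 * y + β + Real.sqrt (2 * β * d) +
      2 * Real.sqrt (y * (4 * y + (Real.sqrt (2 * β) + Real.sqrt d) ^ 2))) :
    ENNReal.ofReal (1 - Real.exp (-y)) ≤ ℙ {ω | K < H ω} := by
  classical
  -- measurable modifications
  have hZae : ∀ i, AEMeasurable (Z i) ℙ := by
    intro i
    by_contra h
    have h0 := hlaw i
    rw [Measure.map_of_not_aemeasurable h] at h0
    exact IsProbabilityMeasure.ne_zero (gaussianReal 0 1) h0.symm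
  set W : Fin d → Ω → ℝ := fun i => (hZae i).mk (Z i) with hW
  have hWmeas : ∀ i, Measurable (W i) := fun i => (hZae i).measurable_mk
  have hWeq : ∀ i, Z i =ᵐ[ℙ] W i := fun i => (hZae i).ae_eq_mk
  have hWlaw : ∀ i, Measure.map (W i) ℙ = gaussianReal 0 1 := by
    intro i
    rw [← Measure.map_congr (hWeq i)]
    exact hlaw i
  have hae : ∀ᵐ ω ∂(ℙ : Measure Ω), ∀ i, Z i ω = W i ω := by
    rw [ae_all_iff]
    exact hWeq
  have hWindep : iIndepFun W ℙ := by
    rw [iIndepFun_iff_measure_inter_preimage_eq_mul] at hindep ⊢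
    intro S sets h_sets
    have h1 : ∀ i, ℙ (W i ⁻¹' sets i) = ℙ (Z i ⁻¹' sets i) := by
      intro i
      apply measure_congr
      filter_upwards [hWeq i] with ω hω
      show (ω ∈ W i ⁻¹' sets i) = (ω ∈ Z i ⁻¹' sets i)
      simp [Set.mem_preimage, hω]
    have h2 : ℙ (⋂ i ∈ S, W i ⁻¹' sets i) = ℙ (⋂ i ∈ S, Z i ⁻¹' sets i) := by
      apply measure_congr
      filter_upwards [hae] with ω hω
      show (ω ∈ ⋂ i ∈ S, W i ⁻¹' sets i) = (ω ∈ ⋂ i ∈ S, Z i ⁻¹' sets i)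
      simp only [Set.mem_iInter, Set.mem_preimage]
      simp [hω]
    rw [h2]
    rw [hindep S h_sets]
    exact (Finset.prod_congr rfl (fun i _ => (h1 i))).symm
  -- positivity facts
  set s : ℝ := β + Real.sqrt (2 * β * d) with hs
  set q : ℝ := Real.sqrt (y * (4 * y + (Real.sqrt (2 * β) + Real.sqrt d) ^ 2)) with hqdef
  have hq0 : 0 ≤ q := Real.sqrt_nonneg _
  have hs0 : 0 < s := by
    have := Real.sqrt_nonneg (2 * β * d); simp only [hs]; linarith
  have hq2 : q^2 = y * (4 * y + (d:ℝ) + 2*s) := by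
    rw [hqdef, Real.sq_sqrt (by positivity)]
    have hmul : Real.sqrt (2 * β) * Real.sqrt (d:ℝ) = Real.sqrt (2 * β * d) :=
      (Real.sqrt_mul (by positivity) _).symm
    have hexp : (Real.sqrt (2 * β) + Real.sqrt d) ^ 2
        = 2*β + 2*Real.sqrt (2 * β * d) + (d:ℝ) := by
      have h1 := Real.sq_sqrt (show (0:ℝ) ≤ 2*β by positivity)
      have h2 := Real.sq_sqrt (Nat.cast_nonneg (α := ℝ) d)
      rw [add_sq]
      linear_combination h1 + h2 + 2*hmul
    rw [hexp, hs]
    ring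
  have hw : ν - s ≥ 4*y + 2*q := by
    rw [hs]; linarith [hν]
  have hν0 : 0 < ν := by linarith
  set D : ℝ := (d:ℝ) + 2*ν with hD
  have hD0 : 0 < D := by
    have : (0:ℝ) ≤ d := Nat.cast_nonneg d
    simp only [hD]; linarith
  -- threshold comparison
  have hsq : (ν - s)^2 ≥ 4*y*D := by
    have h1 : 0 ≤ ν - s - 4*y - 2*q := by linarith
    have h2 : 0 ≤ ν - s - 4*y + 2*q := by linarith
    nlinarith [mul_nonneg h1 h2, hq2]
  set t : ℝ := 2 * Real.sqrt (D * y) with ht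
  have htle : t ≤ ν - s := by
    have h1 : D * y ≤ ((ν - s)/2)^2 := by nlinarith
    have h2 := Real.sqrt_le_sqrt h1
    rw [Real.sqrt_sq (by linarith : 0 ≤ (ν - s)/2)] at h2
    rw [ht]; linarith
  have hKK' : K ≤ (d:ℝ) + ν - t := by
    rw [hK]; simp only [hs] at htle ⊢; linarith
  -- Chernoff
  set l : ℝ := Real.sqrt (D * y) / D with hl
  have hl0 : 0 ≤ l := by positivity
  set Hf : Ω → ℝ := fun ω => ∑ i, (W i ω + a i)^2 with hHf
  have hHfmeas : Measurable Hf := by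
    apply Finset.measurable_sum
    intro i _
    exact ((hWmeas i).add_const (a i)).pow_const 2
  have hHf0 : ∀ ω, 0 ≤ Hf ω := fun ω => Finset.sum_nonneg (fun i _ => sq_nonneg _)
  have hint : Integrable (fun ω => Real.exp (-l * Hf ω)) ℙ := by
    apply Integrable.mono' (integrable_const (1:ℝ))
      (((hHfmeas.const_mul (-l)).exp).aestronglyMeasurable)
    filter_upwards with ω
    rw [Real.norm_eq_abs, abs_of_pos (Real.exp_pos _)]
    apply Real.exp_le_one_iff.mpr
    have := hHf0 ω
    nlinarith
  have hmark := measure_le_le_exp_mul_mgf (X := Hf) (μ := ℙ) ((d:ℝ) + ν - t)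
    (neg_nonpos_of_nonneg hl0) hint
  have hmgf := aux_mgf_le d W hWmeas hWindep hWlaw a l hl0
  rw [hνdef] at hmgf
  have hDy : Real.sqrt (D*y) ^ 2 = D * y := Real.sq_sqrt (by positivity)
  have hexpbound : Real.exp (-(-l) * ((d:ℝ) + ν - t)) *
      Real.exp (l^2*((d:ℝ) + 2*ν) - l*((d:ℝ) + ν)) = Real.exp (-y) := by
    rw [← Real.exp_add]
    congr 1
    have hln : l * t = 2 * y := by
      rw [hl, ht]; exact lt_aux1 D y hD0 hy.le
    have hl2 : l^2 * D = y := by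
      rw [hl]; exact lt_aux2 D y hD0 hy.le
    have : -(-l) * ((d:ℝ) + ν - t) + (l^2*((d:ℝ) + 2*ν) - l*((d:ℝ) + ν))
        = -(l*t) + l^2 * D := by rw [hD]; ring
    rw [this, hln, hl2]
    ring
  have hchern : (ℙ {ω | Hf ω ≤ (d:ℝ) + ν - t}).toReal ≤ Real.exp (-y) := by
    calc (ℙ {ω | Hf ω ≤ (d:ℝ) + ν - t}).toReal
        ≤ Real.exp (-(-l) * ((d:ℝ) + ν - t)) * mgf Hf ℙ (-l) := hmark
      _ ≤ Real.exp (-(-l) * ((d:ℝ) + ν - t)) *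
          Real.exp (l^2*((d:ℝ) + 2*ν) - l*((d:ℝ) + ν)) := by
          apply mul_le_mul_of_nonneg_left _ (Real.exp_pos _).le
          exact hmgf
      _ = Real.exp (-y) := hexpbound
  -- endgame
  have hsetH : ℙ {ω | K < H ω} = ℙ {ω | K < Hf ω} := by
    apply measure_congr
    filter_upwards [hae] with ω hω
    show (ω ∈ {ω | K < H ω}) = (ω ∈ {ω | K < Hf ω})
    simp only [Set.mem_setOf_eq, hH ω, hHf]
    simp [hω]
  have hcompl : {ω | K < Hf ω} = {ω | Hf ω ≤ K}ᶜ := by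
    ext ω; simp [not_le]
  have hle1 : ℙ {ω | Hf ω ≤ K} ≤ ENNReal.ofReal (Real.exp (-y)) := by
    calc ℙ {ω | Hf ω ≤ K} ≤ ℙ {ω | Hf ω ≤ (d:ℝ) + ν - t} := by
          apply measure_mono
          intro ω hω
          exact le_trans hω hKK'
      _ ≤ ENNReal.ofReal (Real.exp (-y)) := by
          rw [ENNReal.le_ofReal_iff_toReal_le (measure_ne_top _ _) (Real.exp_pos _).le]
          exact hchern
  rw [hsetH, hcompl, measure_compl (measurableSet_le hHfmeas measurable_const) (measure_ne_top _ _),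
    measure_univ]
  calc ENNReal.ofReal (1 - Real.exp (-y))
      = ENNReal.ofReal 1 - ENNReal.ofReal (Real.exp (-y)) :=
        ENNReal.ofReal_sub _ (Real.exp_pos _).le
    _ ≤ 1 - ℙ {ω | Hf ω ≤ K} := by
        rw [ENNReal.ofReal_one]
        exact tsub_le_tsub_left hle1 1
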